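/- Let I be an interval containing 0 and let ξ, η : I → ℝ be differentiable functions satisfying ξ'(t) = η(t) and η'(t) = ξ(t)·(3η(t) − ξ(t)² − 1) for all t ∈ I, and suppose η(0) = ξ(0)² + 1. Then for every t ∈ I one has t + arctan(ξ(0)) ∈ (−π/2, π/2), ξ(t) = tan(t + arctan(ξ(0))), and η(t) = ξ(t)² + 1 = 1/cos²(t + arctan(ξ(0))). -/

import Mathlib

open Set Real

/-- Forward Grönwall: a solution of `θ' = c θ` on `[a,b]` with `θ a = 0` vanishes. -/
lemma aux_fwd {c θ : ℝ → ℝ} {a b : ℝ}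
    (hc : ContinuousOn c (Icc a b)) (hθc : ContinuousOn θ (Icc a b))
    (hd : ∀ s ∈ Ico a b, HasDerivWithinAt θ (c s * θ s) (Icc a b) s)
    (h0 : θ a = 0) : ∀ s ∈ Icc a b, θ s = 0 := by
  obtain ⟨C, hC⟩ := isCompact_Icc.exists_bound_of_continuousOn hc
  intro s hs
  have key := norm_le_gronwallBound_of_norm_deriv_right_le (f := θ)
    (f' := fun s => c s * θ s) (δ := 0) (K := max C 0) (ε := 0) hθc
    (fun x hx => (hd x hx).mono_of_mem_nhdsWithin (Icc_mem_nhdsGE_of_mem hx))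
    (by simp [h0])
    (fun x hx => by
      have := hC x (Ico_subset_Icc_self hx)
      have := norm_nonneg (θ x)
      rw [norm_mul]
      nlinarith [le_max_left C 0, norm_nonneg (c x)])
    s hs
  rw [gronwallBound_ε0_δ0] at key
  simpa using le_antisymm key (norm_nonneg _)

/-- On an ord-connected set containing `0`, a solution of `θ' = c θ` with `θ 0 = 0`
vanishes identically. -/
lemma aux_zero {I : Set ℝ} (hI : I.OrdConnected) (h0 : (0 : ℝ) ∈ I) {c θ : ℝ → ℝ}
    (hc : ContinuousOn c I)
    (hd : ∀ t ∈ I, HasDerivWithinAt θ (c t * θ t) I t)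
    (hz : θ 0 = 0) : ∀ t ∈ I, θ t = 0 := by
  have hθc : ContinuousOn θ I := fun t ht => (hd t ht).continuousWithinAt
  intro t ht
  rcases le_total 0 t with h | h
  · have hsub : Icc (0:ℝ) t ⊆ I := hI.out h0 ht
    exact aux_fwd (hc.mono hsub) (hθc.mono hsub)
      (fun s hs => ((hd s (hsub (Ico_subset_Icc_self hs))).mono hsub)) hz t
      ⟨h, le_refl t⟩
  · have hsub : Icc t (0:ℝ) ⊆ I := hI.out ht h0
    have hmaps : MapsTo (fun s : ℝ => -s) (Icc 0 (-t)) (Icc t 0) := by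
      intro x hx
      simp only [mem_Icc] at hx ⊢
      constructor <;> linarith [hx.1, hx.2]
    have hneg : ∀ s ∈ Ico (0:ℝ) (-t),
        HasDerivWithinAt (fun s => θ (-s)) ((-c (-s)) * θ (-s)) (Icc 0 (-t)) s := by
      intro s hs
      have hmem : -s ∈ Icc t 0 := hmaps ⟨hs.1, le_of_lt hs.2⟩
      have h1 : HasDerivWithinAt θ (c (-s) * θ (-s)) (Icc t 0) (-s) :=
        (hd (-s) (hsub hmem)).mono hsub
      have h2 : HasDerivWithinAt (fun s : ℝ => -s) (-1) (Icc 0 (-t)) s :=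
        (hasDerivAt_neg s).hasDerivWithinAt
      have := HasDerivWithinAt.comp s h1 h2 hmaps
      exact this.congr_deriv (by ring)
    have hcc : ContinuousOn (fun s : ℝ => -c (-s)) (Icc 0 (-t)) := by
      have : ContinuousOn (fun s : ℝ => c (-s)) (Icc 0 (-t)) :=
        (hc.mono hsub).comp continuous_neg.continuousOn hmaps
      exact this.neg
    have hθθ : ContinuousOn (fun s : ℝ => θ (-s)) (Icc 0 (-t)) :=
      (hθc.mono hsub).comp continuous_neg.continuousOn hmaps
    have := aux_fwd hcc hθθ hneg (by simpa using hz) (-t) ⟨neg_nonneg.mpr h, le_refl _⟩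
    simpa using this

theorem stmt_12 (I : Set ℝ) (hI : I.OrdConnected) (h0 : (0 : ℝ) ∈ I) (ξ η : ℝ → ℝ)
    (hξ : ∀ t ∈ I, HasDerivWithinAt ξ (η t) I t)
    (hη : ∀ t ∈ I, HasDerivWithinAt η (ξ t * (3 * η t - (ξ t) ^ 2 - 1)) I t)
    (hinit : η 0 = (ξ 0) ^ 2 + 1) :
    ∀ t ∈ I,
      t + Real.arctan (ξ 0) ∈ Set.Ioo (-(Real.pi / 2)) (Real.pi / 2) ∧
      ξ t = Real.tan (t + Real.arctan (ξ 0)) ∧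
      η t = (ξ t) ^ 2 + 1 ∧
      η t = 1 / Real.cos (t + Real.arctan (ξ 0)) ^ 2 := by
  have hξc : ContinuousOn ξ I := fun t ht => (hξ t ht).continuousWithinAt
  -- θ = ξ² + 1 - η vanishes
  have hθd : ∀ t ∈ I, HasDerivWithinAt (fun t => ξ t ^ 2 + 1 - η t)
      (ξ t * (ξ t ^ 2 + 1 - η t)) I t := by
    intro t ht
    have h1 := (((hξ t ht).pow 2).add_const 1).sub (hη t ht)
    exact h1.congr_deriv (by ring)
  have hθ0 : ∀ t ∈ I, ξ t ^ 2 + 1 - η t = 0 :=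
    aux_zero hI h0 hξc hθd (by rw [hinit]; ring)
  -- arctan (ξ t) - t - arctan (ξ 0) vanishes
  have hφd : ∀ t ∈ I, HasDerivWithinAt
      (fun t => Real.arctan (ξ t) - t - Real.arctan (ξ 0))
      ((0 : ℝ → ℝ) t * (Real.arctan (ξ t) - t - Real.arctan (ξ 0))) I t := by
    intro t ht
    have h1 : HasDerivWithinAt (fun t => Real.arctan (ξ t))
        (1 / (1 + ξ t ^ 2) * η t) I t :=
      (Real.hasDerivAt_arctan (ξ t)).comp_hasDerivWithinAt t (hξ t ht)
    have h2 := (h1.sub (hasDerivWithinAt_id t I)).sub_const (Real.arctan (ξ 0))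
    refine h2.congr_deriv ?_
    have hθ := hθ0 t ht
    have hpos : (1 : ℝ) + ξ t ^ 2 > 0 := by positivity
    have hη' : η t = 1 + ξ t ^ 2 := by linarith
    rw [hη']
    field_simp
    simp
  have hφ0 : ∀ t ∈ I, Real.arctan (ξ t) - t - Real.arctan (ξ 0) = 0 :=
    aux_zero hI h0 continuousOn_const hφd (by ring)
  intro t ht
  have harc : Real.arctan (ξ t) = t + Real.arctan (ξ 0) := by
    have := hφ0 t ht; linarith
  have hθ := hθ0 t ht
  refine ⟨?_, ?_, by linarith, ?_⟩
  · rw [← harc]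
    exact ⟨Real.neg_pi_div_two_lt_arctan _, Real.arctan_lt_pi_div_two _⟩
  · rw [← harc, Real.tan_arctan]
  · rw [← harc, Real.cos_sq_arctan]
    have hpos : (1 : ℝ) + ξ t ^ 2 > 0 := by positivity
    field_simp
    linarith
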